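/- arXiv:2402.13365 — 2 statements merged into one kernel-verified Lean document; each statement's English description precedes it below -/
import Mathlib

section
/- Let G be a finite group and p a prime. Then the intersection of the normalizers of all pronormal p-subgroups of G equals the intersection of the normalizers of all Sylow p-subgroups of G. That is, ⋂_{H a pronormal p-subgroup of G} N_G(H) = ⋂_{P ∈ Syl_p(G)} N_G(P). -/
/-- The conjugate `H^g = g⁻¹ H g` of a subgroup `H`. -/
def conjSubgroup {G : Type*} [Group G] (g : G) (H : Subgroup G) : Subgroup G :=
  H.map (MulAut.conj g⁻¹).toMonoidHom

/-- `H` is pronormal in `G` if for every `g ∈ G` there exists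
`x ∈ ⟨H, H^g⟩` with `H^x = H^g`. -/
def IsPronormal {G : Type*} [Group G] (H : Subgroup G) : Prop :=
  ∀ g : G, ∃ x ∈ H ⊔ conjSubgroup g H, conjSubgroup x H = conjSubgroup g H

/-- `H` is weakly normal in `G` if `H^g ≤ N_G(H)` implies `g ∈ N_G(H)`. -/
def IsWeaklyNormal {G : Type*} [Group G] (H : Subgroup G) : Prop :=
  ∀ g : G, conjSubgroup g H ≤ Subgroup.normalizer (H : Set G) → g ∈ Subgroup.normalizer (H : Set G)

/-- `H` is an `𝓗`-subgroup of `G` if `N_G(H) ∩ H^g ≤ H` for all `g ∈ G`. -/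
def IsHSubgroup {G : Type*} [Group G] (H : Subgroup G) : Prop :=
  ∀ g : G, Subgroup.normalizer (H : Set G) ⊓ conjSubgroup g H ≤ H

/-- `H` is an `NE`-subgroup of `G` if `H = N_G(H) ∩ H^G`. -/
def IsNESubgroup {G : Type*} [Group G] (H : Subgroup G) : Prop :=
  H = Subgroup.normalizer (H : Set G) ⊓ Subgroup.normalClosure (H : Set G)

/-- A subgroup `H` satisfies the subnormalizer condition in `G` if for every
subgroup `K` of `G` such that `H` is a normal subgroup of `K`, one has
`N_G(K) ≤ N_G(H)`. -/
def SubnormalizerCondition {G : Type*} [Group G] (H : Subgroup G) : Prop :=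
  ∀ K : Subgroup G, H ≤ K → (H.subgroupOf K).Normal → Subgroup.normalizer (K : Set G) ≤ Subgroup.normalizer (H : Set G)

section Aux

open Pointwise

variable {G : Type*} [Group G]

lemma mem_conjSubgroup_iff {g a : G} {H : Subgroup G} :
    a ∈ conjSubgroup g H ↔ g * a * g⁻¹ ∈ H := by
  simp only [conjSubgroup, Subgroup.mem_map, MulEquiv.coe_toMonoidHom, MulAut.conj_apply,
    inv_inv]
  constructor
  · rintro ⟨h, hh, rfl⟩
    simpa [mul_assoc] using hh
  · intro h
    exact ⟨g * a * g⁻¹, h, by group⟩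

lemma conjSubgroup_eq_pointwise_smul (g : G) (H : Subgroup G) :
    conjSubgroup g H = MulAut.conj g⁻¹ • H := rfl

lemma mem_normalizer_iff_conjSubgroup_eq {g : G} {H : Subgroup G} :
    g ∈ Subgroup.normalizer (H : Set G) ↔ conjSubgroup g H = H := by
  rw [Subgroup.mem_normalizer_iff]
  constructor
  · intro h
    ext a
    rw [mem_conjSubgroup_iff, ← h a]
  · intro h a
    conv_lhs => rw [← h, mem_conjSubgroup_iff]

lemma IsPronormal.isWeaklyNormal {H : Subgroup G} (hH : IsPronormal H) :
    IsWeaklyNormal H := by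
  intro g hg
  obtain ⟨x, hx, hxg⟩ := hH g
  have hxN : x ∈ Subgroup.normalizer (H : Set G) := (sup_le Subgroup.le_normalizer hg) hx
  rw [mem_normalizer_iff_conjSubgroup_eq.mp hxN] at hxg
  exact mem_normalizer_iff_conjSubgroup_eq.mpr hxg.symm

lemma conjSubgroup_le_of_mem_normalizer {g : G} {H P : Subgroup G}
    (hHP : H ≤ P) (hg : g ∈ Subgroup.normalizer (P : Set G)) : conjSubgroup g H ≤ P := by
  intro a ha
  rw [mem_conjSubgroup_iff] at ha
  exact (Subgroup.mem_normalizer_iff.mp hg a).mpr (hHP ha)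

/-- In a finite `p`-group, a pronormal subgroup is normalized by everything. -/
lemma le_normalizer_of_isPronormal_of_isPGroup [Finite G] {p : ℕ} [Fact p.Prime]
    {H L : Subgroup G} (hL : IsPGroup p L) (hpro : IsPronormal H) (hHL : H ≤ L) :
    L ≤ Subgroup.normalizer (H : Set G) := by
  by_contra hc
  set K := (Subgroup.normalizer (H : Set G) ⊓ L).subgroupOf L with hK
  have hKt : K < ⊤ := by
    rcases SetLike.not_le_iff_exists.mp hc with ⟨y, hyL, hyN⟩
    refine lt_top_iff_ne_top.mpr fun h => hyN ?_
    have : (⟨y, hyL⟩ : L) ∈ K := h ▸ Subgroup.mem_top _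
    exact (Subgroup.mem_subgroupOf.mp this).1
  haveI : Group.IsNilpotent ↥L := hL.isNilpotent
  obtain ⟨y, hyN, hyK⟩ := SetLike.exists_of_lt (normalizerCondition_of_isNilpotent (G := ↥L) K hKt)
  apply hyK
  rw [hK, Subgroup.mem_subgroupOf]
  refine ⟨?_, y.2⟩
  apply hpro.isWeaklyNormal
  intro a ha
  rw [mem_conjSubgroup_iff] at ha
  have hbL : (↑y : G) * a * (↑y : G)⁻¹ ∈ L := hHL ha
  set b : ↥L := ⟨(↑y : G) * a * (↑y : G)⁻¹, hbL⟩ with hb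
  have hbK : b ∈ K := Subgroup.mem_subgroupOf.mpr ⟨Subgroup.le_normalizer ha, hbL⟩
  have : y⁻¹ * b * y ∈ K := by
    have := (Subgroup.mem_normalizer_iff.mp hyN (y⁻¹ * b * y)).mpr
    apply this
    have : y * (y⁻¹ * b * y) * y⁻¹ = b := by group
    rw [this]
    exact hbK
  have hcoe : ((y⁻¹ * b * y : ↥L) : G) = a := by
    simp [hb, mul_assoc]
  have := (Subgroup.mem_subgroupOf.mp this).1
  rwa [hcoe] at this

/-- Sylow subgroups are pronormal. -/
lemma Sylow.isPronormal [Finite G] {p : ℕ} [Fact p.Prime] (P : Sylow p G) :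
    IsPronormal (P : Subgroup G) := by
  intro g
  set Q : Sylow p G := g⁻¹ • P with hQ
  have hQcoe : (Q : Subgroup G) = conjSubgroup g ↑P := by
    rw [conjSubgroup_eq_pointwise_smul]; rfl
  set L : Subgroup G := ↑P ⊔ conjSubgroup g ↑P with hL
  have hPL : (P : Subgroup G) ≤ L := le_sup_left
  have hQL : (Q : Subgroup G) ≤ L := hQcoe ▸ le_sup_right
  obtain ⟨l, hl⟩ := MulAction.exists_smul_eq ↥L (P.subtype hPL) (Q.subtype hQL)
  rw [Sylow.smul_subtype] at hl
  have hsub : ((↑l : G) • P : Sylow p G) = Q := by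
    apply Sylow.ext
    have h1 := congrArg (fun S : Sylow p ↥L => Subgroup.map L.subtype (S : Subgroup ↥L)) hl
    simp only [Sylow.coe_subtype, Subgroup.subgroupOf_map_subtype] at h1
    rw [inf_eq_left.mpr (Sylow.smul_le hPL l), inf_eq_left.mpr hQL] at h1
    exact h1
  refine ⟨(↑l : G)⁻¹, L.inv_mem l.2, ?_⟩
  rw [conjSubgroup_eq_pointwise_smul, inv_inv, ← hQcoe, ← hsub]
  rfl

end Aux

theorem iInf_normalizer_pronormal_p_eq_iInf_normalizer_sylow_p
    (G : Type*) [Group G] [Finite G] (p : ℕ) (hp : p.Prime) :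
    (⨅ (H : Subgroup G) (_ : IsPGroup p H ∧ IsPronormal H), Subgroup.normalizer (H : Set G)) =
      ⨅ P : Sylow p G, Subgroup.normalizer ((P : Subgroup G) : Set G) := by
  haveI := Fact.mk hp
  apply le_antisymm
  · refine le_iInf fun P => ?_
    exact iInf_le_of_le ↑P (iInf_le_of_le ⟨P.isPGroup', P.isPronormal⟩ le_rfl)
  · refine le_iInf fun H => le_iInf fun hH => ?_
    obtain ⟨hHp, hpro⟩ := hH
    intro g hg
    obtain ⟨P, hHP⟩ := hHp.exists_le_sylow
    have hgP : g ∈ Subgroup.normalizer ((P : Subgroup G) : Set G) := by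
      simpa using (Subgroup.mem_iInf.mp hg) P
    have hconj : conjSubgroup g H ≤ (P : Subgroup G) :=
      conjSubgroup_le_of_mem_normalizer hHP hgP
    have hLP : H ⊔ conjSubgroup g H ≤ (P : Subgroup G) := sup_le hHP hconj
    have hLp : IsPGroup p ↥(H ⊔ conjSubgroup g H) := P.isPGroup'.to_le hLP
    have hLN : H ⊔ conjSubgroup g H ≤ Subgroup.normalizer (H : Set G) :=
      le_normalizer_of_isPronormal_of_isPGroup hLp hpro le_sup_left
    obtain ⟨x, hxL, hx⟩ := hpro g
    rw [mem_normalizer_iff_conjSubgroup_eq.mp (hLN hxL)] at hx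
    exact mem_normalizer_iff_conjSubgroup_eq.mpr hx.symm
end

section
/- Let G be a finite group and p a prime. Then the intersection of the normalizers of all weakly normal p-subgroups of G equals the intersection of the normalizers of all Sylow p-subgroups of G. That is, ⋂_{H a weakly normal p-subgroup of G} N_G(H) = ⋂_{P ∈ Syl_p(G)} N_G(P). -/
lemma mem_conjSubgroup {G : Type*} [Group G] {g x : G} {H : Subgroup G} :
    x ∈ conjSubgroup g H ↔ g * x * g⁻¹ ∈ H := by
  rw [conjSubgroup]; simp only [Subgroup.mem_map]
  constructor
  · rintro ⟨h, hh, rfl⟩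
    simpa [mul_assoc] using hh
  · intro hh
    exact ⟨g * x * g⁻¹, hh, by simp [MulAut.conj_apply, mul_assoc]⟩

lemma conjSubgroup_mono {G : Type*} [Group G] (g : G) {H K : Subgroup G} (h : H ≤ K) :
    conjSubgroup g H ≤ conjSubgroup g K :=
  Subgroup.map_mono h

lemma conjSubgroup_eq_of_mem_normalizer {G : Type*} [Group G] {g : G} {H : Subgroup G}
    (hg : g ∈ Subgroup.normalizer (H : Set G)) : conjSubgroup g H = H := by
  ext x
  rw [mem_conjSubgroup]
  exact (Subgroup.mem_normalizer_iff.mp hg x).symm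

lemma card_conjSubgroup {G : Type*} [Group G] (g : G) (H : Subgroup G) :
    Nat.card (conjSubgroup g H) = Nat.card H :=
  (Nat.card_congr ((H.equivMapOfInjective _ (EquivLike.injective (MulAut.conj g⁻¹))).toEquiv)).symm

/-- A weakly normal subgroup is normalized by any `p`-subgroup containing it. -/
lemma le_normalizer_of_isWeaklyNormal {G : Type*} [Group G] [Finite G] {p : ℕ}
    (hp : p.Prime) {H K : Subgroup G} (hK : IsPGroup p K) (hHK : H ≤ K)
    (hw : IsWeaklyNormal H) : K ≤ Subgroup.normalizer (H : Set G) := by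
  haveI : Fact p.Prime := ⟨hp⟩
  set M : Subgroup K := (K ⊓ Subgroup.normalizer (H : Set G)).subgroupOf K with hM
  haveI : Group.IsNilpotent K := hK.isNilpotent
  have hnc : NormalizerCondition K := normalizerCondition_of_isNilpotent
  have key : Subgroup.normalizer (M : Set K) ≤ M := by
    intro x hx
    have hxnorm := Subgroup.mem_normalizer_iff.mp hx
    have hconj : conjSubgroup (x : G) H ≤ Subgroup.normalizer (H : Set G) := by
      intro y hy
      have hyH : (x : G) * y * (x : G)⁻¹ ∈ H := mem_conjSubgroup.mp hy
      have hyK : y ∈ K := by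
        have : (x : G)⁻¹ * ((x : G) * y * (x : G)⁻¹) * (x : G) ∈ K := by
          exact K.mul_mem (K.mul_mem (K.inv_mem x.2) (hHK hyH)) x.2
        simpa [mul_assoc] using this
      have hmem : (⟨y, hyK⟩ : K) ∈ M := by
        have h2 : x * ⟨y, hyK⟩ * x⁻¹ ∈ M := by
          rw [hM, Subgroup.mem_subgroupOf]
          refine ⟨?_, Subgroup.le_normalizer (show ((x * ⟨y, hyK⟩ * x⁻¹ : K) : G) ∈ H from ?_)⟩
          · exact (x * ⟨y, hyK⟩ * x⁻¹ : K).2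
          · simpa using hyH
        exact (hxnorm _).mpr h2
      rw [hM, Subgroup.mem_subgroupOf] at hmem
      exact hmem.2
    have hxn : (x : G) ∈ Subgroup.normalizer (H : Set G) := hw _ hconj
    rw [hM, Subgroup.mem_subgroupOf]
    exact ⟨x.2, hxn⟩
  have hMtop : M = ⊤ := by
    by_contra hne
    have hlt := hnc M (lt_top_iff_ne_top.mpr hne)
    exact absurd key (not_le_of_gt hlt)
  rw [hM, Subgroup.subgroupOf_eq_top] at hMtop
  exact fun x hx => (hMtop hx).2

lemma sylow_isWeaklyNormal {G : Type*} [Group G] [Finite G] {p : ℕ} (hp : p.Prime)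
    (P : Sylow p G) : IsWeaklyNormal (P : Subgroup G) := by
  haveI : Fact p.Prime := ⟨hp⟩
  intro g hg
  have hQp : IsPGroup p ↥(conjSubgroup g (P : Subgroup G)) := P.2.map _
  have hsup : IsPGroup p ↥(conjSubgroup g (P : Subgroup G) ⊔ (P : Subgroup G)) :=
    hQp.to_sup_of_normal_right' P.2 hg
  have heq : conjSubgroup g (P : Subgroup G) ⊔ (P : Subgroup G) = (P : Subgroup G) :=
    P.3 hsup le_sup_right
  have hle : conjSubgroup g (P : Subgroup G) ≤ (P : Subgroup G) :=
    le_sup_left.trans heq.le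
  have hEq : conjSubgroup g (P : Subgroup G) = (P : Subgroup G) :=
    Subgroup.eq_of_le_of_card_ge hle (card_conjSubgroup g (P : Subgroup G)).ge
  refine Subgroup.mem_normalizer_iff.mpr fun x => ?_
  rw [← mem_conjSubgroup (g := g), hEq]

theorem iInf_normalizer_weaklyNormal_p_eq_iInf_normalizer_sylow_p
    (G : Type*) [Group G] [Finite G] (p : ℕ) (hp : p.Prime) :
    (⨅ (H : Subgroup G) (_ : IsPGroup p H ∧ IsWeaklyNormal H), Subgroup.normalizer (H : Set G)) =
      ⨅ P : Sylow p G, Subgroup.normalizer ((P : Subgroup G) : Set G) := by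
  refine le_antisymm (le_iInf fun P => ?_) (le_iInf fun H => le_iInf fun hcond => ?_)
  · exact iInf₂_le (P : Subgroup G) ⟨P.2, sylow_isWeaklyNormal hp P⟩
  · obtain ⟨hpH, hw⟩ := hcond
    intro g hg
    rw [Subgroup.mem_iInf] at hg
    obtain ⟨P, hHP⟩ := hpH.exists_le_sylow
    have hPle : (P : Subgroup G) ≤ Subgroup.normalizer (H : Set G) :=
      le_normalizer_of_isWeaklyNormal hp P.2 hHP hw
    refine hw g ?_
    calc conjSubgroup g H ≤ conjSubgroup g (P : Subgroup G) := conjSubgroup_mono g hHP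
      _ = (P : Subgroup G) := conjSubgroup_eq_of_mem_normalizer (hg P)
      _ ≤ Subgroup.normalizer (H : Set G) := hPle
end
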